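/- Let S₁ < 0 < S₂ be real numbers and φ > 1. Define H(h) := φ (S₂ − S₁) + S₁ e^{−S₂ h} − S₂ e^{−S₁ h}. Then H(0) = (φ − 1)(S₂ − S₁) > 0, H'(h) < 0 for all h > 0, and H(h) → −∞ as h → ∞; hence there exists a unique h̄ > 0 with H(h̄) = 0. Moreover, if in addition φ < ( S₂ e^{−S₁ b} − S₁ e^{−S₂ b} ) / (S₂ − S₁) for some b > 0, then h̄ < b. -/

import Mathlib

open Real Filter

/-- For `S₁ < 0 < S₂` and `φ > 1`, the function
`H(h) = φ(S₂−S₁) + S₁ e^{−S₂ h} − S₂ e^{−S₁ h}` satisfies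
`H(0) = (φ−1)(S₂−S₁) > 0`, `H' < 0` on `(0,∞)`, `H → −∞` at `∞`; hence there is a unique
`h̄ > 0` with `H(h̄) = 0`, and if `φ < (S₂ e^{−S₁ b} − S₁ e^{−S₂ b})/(S₂−S₁)` for some
`b > 0` then `h̄ < b`. -/
theorem existence_unique_hbar
    (S₁ S₂ φ : ℝ) (hS1 : S₁ < 0) (hS2 : 0 < S₂) (hφ : 1 < φ) :
    (φ * (S₂ - S₁) + S₁ * Real.exp (-S₂ * 0) - S₂ * Real.exp (-S₁ * 0)
      = (φ - 1) * (S₂ - S₁)) ∧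
    (0 < (φ - 1) * (S₂ - S₁)) ∧
    (∀ h : ℝ, 0 < h →
      deriv (fun t => φ * (S₂ - S₁) + S₁ * Real.exp (-S₂ * t) - S₂ * Real.exp (-S₁ * t)) h
        < 0) ∧
    Tendsto (fun t => φ * (S₂ - S₁) + S₁ * Real.exp (-S₂ * t) - S₂ * Real.exp (-S₁ * t))
      atTop atBot ∧
    ∃ hbar : ℝ, (0 < hbar ∧
        φ * (S₂ - S₁) + S₁ * Real.exp (-S₂ * hbar) - S₂ * Real.exp (-S₁ * hbar) = 0) ∧
      (∀ h' : ℝ, 0 < h' →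
        φ * (S₂ - S₁) + S₁ * Real.exp (-S₂ * h') - S₂ * Real.exp (-S₁ * h') = 0 →
        h' = hbar) ∧
      (∀ b : ℝ, 0 < b →
        φ < (S₂ * Real.exp (-S₁ * b) - S₁ * Real.exp (-S₂ * b)) / (S₂ - S₁) →
        hbar < b) := by
  have hS12 : 0 < S₂ - S₁ := by linarith
  set H : ℝ → ℝ := fun t => φ * (S₂ - S₁) + S₁ * Real.exp (-S₂ * t) - S₂ * Real.exp (-S₁ * t)
    with hHdef
  have hH0 : H 0 = (φ - 1) * (S₂ - S₁) := by simp [hHdef]; ring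
  have hH0pos : 0 < (φ - 1) * (S₂ - S₁) := mul_pos (by linarith) hS12
  have hderiv : ∀ x : ℝ, HasDerivAt H (S₁ * S₂ * (Real.exp (-S₁ * x) - Real.exp (-S₂ * x))) x := by
    intro x
    have h1 : HasDerivAt (fun t : ℝ => -S₂ * t) (-S₂) x := by
      simpa using (hasDerivAt_id x).const_mul (-S₂)
    have h2 : HasDerivAt (fun t : ℝ => -S₁ * t) (-S₁) x := by
      simpa using (hasDerivAt_id x).const_mul (-S₁)
    have e1 := (h1.exp).const_mul S₁
    have e2 := (h2.exp).const_mul S₂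
    have := ((hasDerivAt_const x (φ * (S₂ - S₁))).add e1).sub e2
    refine this.congr_deriv ?_
    ring
  have hcont : Continuous H := by
    apply Continuous.sub
    · exact continuous_const.add (continuous_const.mul ((continuous_const.mul continuous_id).rexp))
    · exact continuous_const.mul ((continuous_const.mul continuous_id).rexp)
  have hderivneg : ∀ h : ℝ, 0 < h → deriv H h < 0 := by
    intro h hh
    rw [(hderiv h).deriv]
    have hlt : Real.exp (-S₂ * h) < Real.exp (-S₁ * h) := by
      apply Real.exp_lt_exp.2
      nlinarith
    exact mul_neg_of_neg_of_pos (mul_neg_of_neg_of_pos hS1 hS2) (by linarith)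
  have hanti : StrictAntiOn H (Set.Ici 0) := by
    apply StrictAntiOn.mono (s := Set.Ici (0:ℝ))
    · exact strictAntiOn_of_deriv_neg (convex_Ici 0) hcont.continuousOn
        (fun x hx => hderivneg x (by simpa using hx))
    · exact le_rfl
  have hbot : Tendsto H atTop atBot := by
    have h1 : Tendsto (fun t : ℝ => Real.exp (-S₁ * t)) atTop atTop :=
      Real.tendsto_exp_atTop.comp (tendsto_id.const_mul_atTop (by linarith))
    have h2 : Tendsto (fun t : ℝ => -S₂ * Real.exp (-S₁ * t)) atTop atBot := by
      exact Tendsto.const_mul_atTop_of_neg (by linarith) h1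
    have h3 : Tendsto (fun t : ℝ => Real.exp (-S₂ * t)) atTop (nhds 0) := by
      apply Real.tendsto_exp_atBot.comp
      exact tendsto_id.const_mul_atTop_of_neg (by linarith)
    have h4 : Tendsto (fun t : ℝ => φ * (S₂ - S₁) + S₁ * Real.exp (-S₂ * t)) atTop
        (nhds (φ * (S₂ - S₁) + S₁ * 0)) := tendsto_const_nhds.add (h3.const_mul S₁)
    have := h4.add_atBot h2
    simpa [hHdef, sub_eq_add_neg, neg_mul] using this
  refine ⟨hH0, hH0pos, hderivneg, hbot, ?_⟩
  -- existence via IVT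
  obtain ⟨N, hN0, hNneg⟩ : ∃ N : ℝ, 0 ≤ N ∧ H N < 0 := by
    have := (hbot.eventually (eventually_lt_atBot 0)).and (eventually_ge_atTop 0)
    obtain ⟨N, h1, h2⟩ := this.exists
    exact ⟨N, h2, h1⟩
  have hmem : (0 : ℝ) ∈ Set.Icc (H N) (H 0) := ⟨hNneg.le, by rw [hH0]; exact hH0pos.le⟩
  obtain ⟨hbar, hbarmem, hbareq⟩ := intermediate_value_Icc' hN0 hcont.continuousOn hmem
  have hbarpos : 0 < hbar := by
    rcases lt_or_eq_of_le hbarmem.1 with h | h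
    · exact h
    · exfalso; rw [← h] at hbareq; rw [hH0] at hbareq; linarith
  refine ⟨hbar, ⟨hbarpos, hbareq⟩, ?_, ?_⟩
  · intro h' hh' heq
    have heq' : H h' = 0 := heq
    rcases lt_trichotomy h' hbar with h | h | h
    · have := hanti (le_of_lt hh') hbarpos.le h
      rw [heq', hbareq] at this; exact absurd this (lt_irrefl 0)
    · exact h
    · have := hanti hbarpos.le (le_of_lt hh') h
      rw [heq', hbareq] at this; exact absurd this (lt_irrefl 0)
  · intro b hb hφb
    have hHb : H b < 0 := by
      have h5 : φ * (S₂ - S₁) < S₂ * Real.exp (-S₁ * b) - S₁ * Real.exp (-S₂ * b) :=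
        (lt_div_iff₀ hS12).1 hφb
      simp only [hHdef]; linarith
    by_contra hle
    push_neg at hle
    have := hanti hb.le hbarpos.le (lt_of_le_of_ne hle (by
      intro h; rw [h] at hHb; rw [hbareq] at hHb; exact lt_irrefl 0 hHb))
    rw [hbareq] at this
    linarith
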